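/- Fix a nonzero linear form l ∈ H₁. (a) For all f, g ∈ P such that l² divides f and l² divides g: g ∈ F_f if and only if every a ∈ ℝ³ with (f/l²)(a) = 0 satisfies (g/l²)(a) = 0. (b) For every linear subspace U ⊆ ℝ³ there exists f ∈ P divisible by l² with {a ∈ ℝ³ : (f/l²)(a) = 0} = U. Consequently, the assignment F_f ↦ {a ∈ ℝ³ : (f/l²)(a) = 0} is a bijection from the set of faces {F_f : f ∈ P, l² ∣ f} onto the set of linear subspaces of ℝ³. -/

import Mathlib

open MvPolynomial

noncomputable section

/-- The space of ternary (3-variable) real polynomials. `H d` corresponds to the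
homogeneous polynomials of degree `d` via the predicate `IsHomogeneous`. -/
abbrev MvP : Type := MvPolynomial (Fin 3) ℝ

/-- The cone `P` of nonnegative ternary quartics. -/
def Pcone : Set MvP :=
  {f | f.IsHomogeneous 4 ∧ ∀ a : Fin 3 → ℝ, 0 ≤ eval a f}

/-- `F` is a face of the cone `P`. -/
def IsFace (F : Set MvP) : Prop :=
  F ⊆ Pcone ∧
  (∀ a ∈ F, ∀ b ∈ F, a + b ∈ F) ∧
  (∀ c : ℝ, 0 ≤ c → ∀ a ∈ F, c • a ∈ F) ∧
  (∀ a ∈ Pcone, ∀ b ∈ Pcone, a + b ∈ F → a ∈ F ∧ b ∈ F)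

/-- `J_F = {q ∈ H₂ : q² ∈ F}`. -/
def Jset (F : Set MvP) : Set MvP :=
  {q | q.IsHomogeneous 2 ∧ q ^ 2 ∈ F}

/-- `F_f = {g ∈ P : f - ε g ∈ P for some ε > 0}`, the smallest face of `P`
containing `f` as an inner point. -/
def Fface (f : MvP) : Set MvP :=
  {g ∈ Pcone | ∃ ε : ℝ, 0 < ε ∧ f - ε • g ∈ Pcone}

section Stmt10Aux

abbrev V3 := Fin 3 → ℝ

lemma degree_eq_sum3 (d : Fin 3 →₀ ℕ) : d.degree = d 0 + d 1 + d 2 := by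
  rw [Finsupp.degree_apply, Finset.sum_subset (Finset.subset_univ d.support)
    (fun i _ hi => by simpa using Finsupp.notMem_support_iff.mp hi)]
  simp [Fin.sum_univ_three]

lemma prod_eq3 (d : Fin 3 →₀ ℕ) (x : V3) :
    (∏ i ∈ d.support, x i ^ d i) = x 0 ^ d 0 * x 1 ^ d 1 * x 2 ^ d 2 := by
  have : (∏ i ∈ d.support, x i ^ d i) = d.prod fun i k => x i ^ k := rfl
  rw [this, Finsupp.prod_fintype _ _ (fun i => pow_zero _)]
  simp [Fin.prod_univ_three]

lemma homog_degree_sum {p : MvP} {n : ℕ} (hp : p.IsHomogeneous n) {d : Fin 3 →₀ ℕ}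
    (hd : d ∈ p.support) : d 0 + d 1 + d 2 = n := by
  rw [← degree_eq_sum3]
  have := hp (MvPolynomial.mem_support_iff.mp hd)
  rw [Finsupp.degree_eq_weight_one]; exact this

lemma eval_line {l : MvP} (hl : l.IsHomogeneous 1) (a v : V3) (t : ℝ) :
    eval (fun i => a i + t * v i) l = eval a l + t * eval v l := by
  rw [eval_eq, eval_eq, eval_eq, Finset.mul_sum, ← Finset.sum_add_distrib]
  refine Finset.sum_congr rfl fun d hd => ?_
  have h1 := homog_degree_sum hl hd
  have h2 : (d 0 = 1 ∧ d 1 = 0 ∧ d 2 = 0) ∨ (d 0 = 0 ∧ d 1 = 1 ∧ d 2 = 0) ∨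
      (d 0 = 0 ∧ d 1 = 0 ∧ d 2 = 1) := by omega
  rcases h2 with ⟨e0, e1, e2⟩ | ⟨e0, e1, e2⟩ | ⟨e0, e1, e2⟩ <;>
    simp [prod_eq3, e0, e1, e2] <;> ring

lemma exists_eval_ne {l : MvP} (hl0 : l ≠ 0) : ∃ v : V3, eval v l ≠ 0 := by
  by_contra h
  push_neg at h
  exact hl0 (MvPolynomial.funext fun x => by simp [h x])

lemma psd_of_sq_mul {l p : MvP} (hl : l.IsHomogeneous 1) (hl0 : l ≠ 0)
    (h : ∀ x : V3, 0 ≤ eval x (l ^ 2 * p)) : ∀ a : V3, 0 ≤ eval a p := by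
  intro a
  obtain ⟨v, hv⟩ := exists_eval_ne hl0
  set s : ℝ → ℝ := fun t => eval (fun i => a i + t * v i) p with hs
  have hcont : Continuous s := by
    apply (MvPolynomial.continuous_eval p).comp
    exact continuous_pi fun i => continuous_const.add (continuous_id.mul continuous_const)
  have key : ∀ t : ℝ, eval (fun i => a i + t * v i) l ≠ 0 → 0 ≤ s t := by
    intro t h0
    have h1 := h (fun i => a i + t * v i)
    rw [map_mul, map_pow] at h1
    by_contra hneg
    push_neg at hneg
    have h2 : 0 < eval (fun i => a i + t * v i) l ^ 2 := by positivity
    nlinarith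
  set t0 : ℝ := -eval a l / eval v l with ht0
  have hgood : ∀ t : ℝ, t ≠ t0 → 0 ≤ s t := by
    intro t ht
    refine key t fun h0 => ht ?_
    rw [eval_line hl] at h0
    rw [ht0, eq_div_iff hv]
    linarith
  have hs0 : s 0 = eval a p := by
    simp only [hs]
    rw [show (fun i => a i + 0 * v i) = a from by funext i; ring]
  rcases eq_or_ne (0 : ℝ) t0 with h0 | h0
  · have htd : Filter.Tendsto s (nhdsWithin 0 {(0:ℝ)}ᶜ) (nhds (s 0)) :=
      (hcont.tendsto 0).mono_left nhdsWithin_le_nhds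
    have hev : ∀ᶠ t in nhdsWithin (0:ℝ) {(0:ℝ)}ᶜ, 0 ≤ s t :=
      Filter.eventually_of_mem self_mem_nhdsWithin
        (fun t ht => hgood t (fun he => ht (by rw [he, ← h0]; rfl)))
    have := ge_of_tendsto htd hev
    linarith [hs0 ▸ this]
  · rw [← hs0]
    exact hgood 0 h0

lemma deg2_prod (d : Fin 3 →₀ ℕ) (hd : d 0 + d 1 + d 2 = 2) :
    ∃ ij : Fin 3 × Fin 3, ∀ x : V3, x 0 ^ d 0 * x 1 ^ d 1 * x 2 ^ d 2 = x ij.1 * x ij.2 := by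
  have h : (d 0 = 2 ∧ d 1 = 0 ∧ d 2 = 0) ∨ (d 0 = 0 ∧ d 1 = 2 ∧ d 2 = 0) ∨
      (d 0 = 0 ∧ d 1 = 0 ∧ d 2 = 2) ∨ (d 0 = 1 ∧ d 1 = 1 ∧ d 2 = 0) ∨
      (d 0 = 1 ∧ d 1 = 0 ∧ d 2 = 1) ∨ (d 0 = 0 ∧ d 1 = 1 ∧ d 2 = 1) := by omega
  rcases h with ⟨e0,e1,e2⟩|⟨e0,e1,e2⟩|⟨e0,e1,e2⟩|⟨e0,e1,e2⟩|⟨e0,e1,e2⟩|⟨e0,e1,e2⟩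
  · exact ⟨(0,0), fun x => by rw [e0,e1,e2]; ring⟩
  · exact ⟨(1,1), fun x => by rw [e0,e1,e2]; ring⟩
  · exact ⟨(2,2), fun x => by rw [e0,e1,e2]; ring⟩
  · exact ⟨(0,1), fun x => by rw [e0,e1,e2]; ring⟩
  · exact ⟨(0,2), fun x => by rw [e0,e1,e2]; ring⟩
  · exact ⟨(1,2), fun x => by rw [e0,e1,e2]; ring⟩

lemma quad_rep {q : MvP} (hq : q.IsHomogeneous 2) :
    ∃ M : Fin 3 → Fin 3 → ℝ, ∀ x : V3, eval x q = ∑ i, ∑ j, M i j * x i * x j := by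
  classical
  choose! I hI using fun (d : Fin 3 →₀ ℕ) (hd : d ∈ q.support) =>
    deg2_prod d (homog_degree_sum hq hd)
  refine ⟨fun i j => ∑ d ∈ q.support, if (I d).1 = i ∧ (I d).2 = j then coeff d q else 0,
    fun x => ?_⟩
  have inner : ∀ d : Fin 3 →₀ ℕ,
      (∑ i, ∑ j, if (I d).1 = i ∧ (I d).2 = j then coeff d q * x i * x j else 0)
        = coeff d q * (x (I d).1 * x (I d).2) := by
    intro d
    rw [Finset.sum_eq_single ((I d).1)]
    · rw [Finset.sum_eq_single ((I d).2)]
      · rw [if_pos ⟨rfl, rfl⟩]; ring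
      · intro b _ hb; exact if_neg (fun hc => hb hc.2.symm)
      · intro hmem; exact absurd (Finset.mem_univ _) hmem
    · intro b _ hb
      exact Finset.sum_eq_zero fun j _ => if_neg (fun hc => hb hc.1.symm)
    · intro hmem; exact absurd (Finset.mem_univ _) hmem
  calc eval x q = ∑ d ∈ q.support, coeff d q * (x (I d).1 * x (I d).2) := by
        rw [eval_eq]
        exact Finset.sum_congr rfl fun d hd => by rw [prod_eq3, hI d hd x]
    _ = ∑ d ∈ q.support, ∑ i, ∑ j,
          if (I d).1 = i ∧ (I d).2 = j then coeff d q * x i * x j else 0 :=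
        (Finset.sum_congr rfl fun d _ => (inner d).symm)
    _ = ∑ i, ∑ j, (∑ d ∈ q.support,
          if (I d).1 = i ∧ (I d).2 = j then coeff d q else 0) * x i * x j := by
        rw [Finset.sum_comm]
        refine Finset.sum_congr rfl fun i _ => ?_
        rw [Finset.sum_comm]
        refine Finset.sum_congr rfl fun j _ => ?_
        rw [Finset.sum_mul, Finset.sum_mul]
        exact Finset.sum_congr rfl fun d _ => by rw [ite_mul, ite_mul, zero_mul, zero_mul]

def Qm (M : Fin 3 → Fin 3 → ℝ) (x : V3) : ℝ := ∑ i, ∑ j, M i j * x i * x j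
def crossm (M : Fin 3 → Fin 3 → ℝ) (x y : V3) : ℝ :=
  ∑ i, ∑ j, M i j * (x i * y j + y i * x j)

lemma Qm_add (M : Fin 3 → Fin 3 → ℝ) (x y : V3) :
    Qm M (x + y) = Qm M x + Qm M y + crossm M x y := by
  unfold Qm crossm
  simp only [← Finset.sum_add_distrib, Pi.add_apply]
  exact Finset.sum_congr rfl fun i _ => Finset.sum_congr rfl fun j _ => by ring

lemma Qm_smul (M : Fin 3 → Fin 3 → ℝ) (t : ℝ) (x : V3) : Qm M (t • x) = t ^ 2 * Qm M x := by
  unfold Qm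
  simp only [Finset.mul_sum, Pi.smul_apply, smul_eq_mul]
  exact Finset.sum_congr rfl fun i _ => Finset.sum_congr rfl fun j _ => by ring

lemma crossm_smul_right (M : Fin 3 → Fin 3 → ℝ) (t : ℝ) (x y : V3) :
    crossm M x (t • y) = t * crossm M x y := by
  unfold crossm
  simp only [Finset.mul_sum, Pi.smul_apply, smul_eq_mul]
  exact Finset.sum_congr rfl fun i _ => Finset.sum_congr rfl fun j _ => by ring

lemma crossm_comm (M : Fin 3 → Fin 3 → ℝ) (x y : V3) : crossm M x y = crossm M y x := by
  unfold crossm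
  exact Finset.sum_congr rfl fun i _ => Finset.sum_congr rfl fun j _ => by ring

lemma Qm_zero (M : Fin 3 → Fin 3 → ℝ) : Qm M 0 = 0 := by
  unfold Qm; simp

lemma crossm_eq_zero {M : Fin 3 → Fin 3 → ℝ} (hpsd : ∀ x : V3, 0 ≤ Qm M x) {k : V3}
    (hk : Qm M k = 0) (x : V3) : crossm M k x = 0 := by
  by_contra hb
  set b := crossm M k x with hbdef
  set A := Qm M x with hA
  have hA0 : 0 ≤ A := hpsd x
  set c : ℝ := 1 / (A + 1) with hc
  have hc0 : 0 < c := by positivity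
  have hc1 : c * (A + 1) = 1 := by
    rw [hc]; field_simp
  have h1 := hpsd (k + (-b * c) • x)
  rw [Qm_add, Qm_smul, crossm_smul_right, hk, ← hbdef, ← hA] at h1
  have hb2 : 0 < b ^ 2 := pow_two_pos_of_ne_zero hb
  nlinarith [mul_pos hb2 (mul_pos hc0 hc0), mul_pos hb2 hc0]

lemma Qm_add_mem {M : Fin 3 → Fin 3 → ℝ} (hpsd : ∀ x : V3, 0 ≤ Qm M x) {k : V3}
    (hk : Qm M k = 0) (x : V3) : Qm M (x + k) = Qm M x := by
  rw [Qm_add, hk, crossm_comm, crossm_eq_zero hpsd hk]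
  ring

/-- zero set of a psd `Qm` is a submodule -/
def Zmod (M : Fin 3 → Fin 3 → ℝ) (hpsd : ∀ x : V3, 0 ≤ Qm M x) : Submodule ℝ V3 where
  carrier := {x | Qm M x = 0}
  add_mem' := by
    intro a b ha hb
    simp only [Set.mem_setOf_eq] at *
    rw [Qm_add_mem hpsd hb a, ha]
  zero_mem' := Qm_zero M
  smul_mem' := by
    intro t a ha
    simp only [Set.mem_setOf_eq] at *
    rw [Qm_smul, ha, mul_zero]

lemma quad_ineq {M N : Fin 3 → Fin 3 → ℝ}
    (hQ0 : ∀ x : V3, 0 ≤ Qm M x) (hG0 : ∀ x : V3, 0 ≤ Qm N x)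
    (hZ : ∀ x : V3, Qm M x = 0 → Qm N x = 0) :
    ∃ ε : ℝ, 0 < ε ∧ ∀ x : V3, ε * Qm N x ≤ Qm M x := by
  classical
  have hQc : Continuous (Qm M) := by
    unfold Qm
    exact continuous_finset_sum _ fun i _ => continuous_finset_sum _ fun j _ =>
      (continuous_const.mul (continuous_apply i)).mul (continuous_apply j)
  have hGc : Continuous (Qm N) := by
    unfold Qm
    exact continuous_finset_sum _ fun i _ => continuous_finset_sum _ fun j _ =>
      (continuous_const.mul (continuous_apply i)).mul (continuous_apply j)
  set Z := Zmod M hQ0 with hZdef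
  obtain ⟨W, hW⟩ := Submodule.exists_isCompl Z
  have hdec : ∀ x : V3, ∃ w ∈ W, ∃ z ∈ Z, x = w + z := by
    intro x
    have hx : x ∈ Z ⊔ W := by rw [hW.sup_eq_top]; trivial
    rcases Submodule.mem_sup.mp hx with ⟨z, hz, w, hw, hxx⟩
    exact ⟨w, hw, z, hz, by rw [← hxx, add_comm]⟩
  have hQinv : ∀ (w : V3), ∀ z ∈ Z, Qm M (w + z) = Qm M w := fun w z hz =>
    Qm_add_mem hQ0 hz w
  have hGinv : ∀ (w : V3), ∀ z ∈ Z, Qm N (w + z) = Qm N w := fun w z hz =>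
    Qm_add_mem hG0 (hZ z hz) w
  by_cases hWbot : W = ⊥
  · refine ⟨1, one_pos, fun x => ?_⟩
    obtain ⟨w, hw, z, hz, rfl⟩ := hdec x
    rw [hWbot, Submodule.mem_bot] at hw
    subst hw
    rw [hQinv 0 z hz, hGinv 0 z hz, Qm_zero, Qm_zero]
    norm_num
  · obtain ⟨w₀, hw₀W, hw₀⟩ := Submodule.exists_mem_ne_zero_of_ne_bot hWbot
    set S : Set V3 := Metric.sphere (0 : V3) 1 ∩ (W : Set V3) with hSdef
    have hScomp : IsCompact S :=
      (isCompact_sphere (0 : V3) 1).inter_right W.closed_of_finiteDimensional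
    have hSne : S.Nonempty := by
      refine ⟨‖w₀‖⁻¹ • w₀, ?_, W.smul_mem _ hw₀W⟩
      have hn0 : ‖w₀‖ ≠ 0 := norm_ne_zero_iff.mpr hw₀
      simp [norm_smul, abs_of_nonneg (norm_nonneg w₀), inv_mul_cancel₀ hn0]
    obtain ⟨w₁, hw₁S, hmin⟩ := hScomp.exists_isMinOn hSne hQc.continuousOn
    set c := Qm M w₁ with hcdef
    have hcpos : 0 < c := by
      rcases (hQ0 w₁).lt_or_eq with h | h
      · exact h
      · exfalso
        have hw₁Z : w₁ ∈ Z := h.symm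
        have hw10 : w₁ = 0 := by
          have hbot := hW.inf_eq_bot
          have hmem : w₁ ∈ Z ⊓ W := ⟨hw₁Z, hw₁S.2⟩
          rw [hbot, Submodule.mem_bot] at hmem
          exact hmem
        have hws := hw₁S.1
        rw [hw10] at hws
        simp at hws
    obtain ⟨y₁, hy₁, hmax⟩ := (isCompact_sphere (0 : V3) 1).exists_isMaxOn
      (NormedSpace.sphere_nonempty.mpr zero_le_one) hGc.continuousOn
    set C := Qm N y₁ + 1 with hCdef
    have hCpos : 0 < C := by have := hG0 y₁; positivity
    refine ⟨c / C, div_pos hcpos hCpos, fun x => ?_⟩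
    obtain ⟨w, hwW, z, hz, rfl⟩ := hdec x
    rw [hQinv w z hz, hGinv w z hz]
    by_cases hw0 : w = 0
    · subst hw0
      rw [Qm_zero, Qm_zero]
      norm_num
    · set r := ‖w‖ with hr
      have hrpos : 0 < r := norm_pos_iff.mpr hw0
      set wh := r⁻¹ • w with hwh
      have hwhS : wh ∈ S := by
        refine ⟨?_, W.smul_mem _ hwW⟩
        have hwh1 : ‖wh‖ = 1 := by
          rw [hwh, norm_smul, norm_inv, norm_norm, ← hr, inv_mul_cancel₀ hrpos.ne']
        simp [hwh1]
      have hwdec : w = r • wh := by rw [hwh, smul_smul, mul_inv_cancel₀ hrpos.ne', one_smul]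
      have hQw : Qm M w = r ^ 2 * Qm M wh := by
        conv_lhs => rw [hwdec]
        exact Qm_smul ..
      have hGw : Qm N w = r ^ 2 * Qm N wh := by
        conv_lhs => rw [hwdec]
        exact Qm_smul ..
      have h1 : c ≤ Qm M wh := hmin hwhS
      have h2 : Qm N wh ≤ C := by
        have h3 := hmax hwhS.1
        simp only [Set.mem_setOf_eq] at h3
        simp only [hCdef]
        linarith
      rw [hQw, hGw]
      have key : (c / C) * Qm N wh ≤ c := by
        calc (c / C) * Qm N wh ≤ (c / C) * C := by
              apply mul_le_mul_of_nonneg_left h2 (le_of_lt (div_pos hcpos hCpos))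
          _ = c := div_mul_cancel₀ c hCpos.ne'
      calc (c / C) * (r ^ 2 * Qm N wh) = r ^ 2 * ((c / C) * Qm N wh) := by ring
        _ ≤ r ^ 2 * c := by apply mul_le_mul_of_nonneg_left key (sq_nonneg r)
        _ ≤ r ^ 2 * Qm M wh := by apply mul_le_mul_of_nonneg_left h1 (sq_nonneg r)

lemma homog_quot {p q : MvP} {m n : ℕ} (hp : p.IsHomogeneous m) (hp0 : p ≠ 0)
    (hpq : (p * q).IsHomogeneous (m + n)) : q.IsHomogeneous n := by
  classical
  have key : ∀ k : ℕ, k ≠ n → homogeneousComponent k q = 0 := by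
    intro k hk
    have h2 : homogeneousComponent (m + k) (p * q) = 0 := by
      rw [homogeneousComponent_of_mem ((mem_homogeneousSubmodule _ _).mpr hpq)]
      rw [if_neg (fun hc => hk (Nat.add_left_cancel hc))]
    have h3 : homogeneousComponent (m + k) (p * q) = p * homogeneousComponent k q := by
      conv_lhs => rw [← sum_homogeneousComponent q, Finset.mul_sum, map_sum]
      have hterm : ∀ i ∈ Finset.range (q.totalDegree + 1),
          homogeneousComponent (m + k) (p * homogeneousComponent i q)
            = if i = k then p * homogeneousComponent i q else 0 := by
        intro i _
        have hmem : p * homogeneousComponent i q ∈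
            homogeneousSubmodule (Fin 3) ℝ (m + i) :=
          (mem_homogeneousSubmodule _ _).mpr (hp.mul (homogeneousComponent_isHomogeneous i q))
        rw [homogeneousComponent_of_mem hmem]
        by_cases hik : i = k
        · subst hik; rw [if_pos rfl, if_pos rfl]
        · rw [if_neg (fun hc => hik (Nat.add_left_cancel hc).symm), if_neg hik]
      rw [Finset.sum_congr rfl hterm, Finset.sum_ite_eq' _ k
        (fun i => p * homogeneousComponent i q)]
      by_cases hkN : k ∈ Finset.range (q.totalDegree + 1)
      · rw [if_pos hkN]
      · rw [if_neg hkN]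
        have hz : homogeneousComponent k q = 0 := by
          apply homogeneousComponent_eq_zero
          simpa using Nat.lt_of_succ_le (Nat.le_of_not_lt (by simpa using hkN))
        rw [hz, mul_zero]
    rw [h2] at h3
    rcases mul_eq_zero.mp h3.symm with h | h
    · exact absurd h hp0
    · exact h
  by_cases hn : n ∈ Finset.range (q.totalDegree + 1)
  · have hqq : q = homogeneousComponent n q := by
      nth_rewrite 1 [← sum_homogeneousComponent q]
      exact Finset.sum_eq_single_of_mem n hn (fun i _ hi => key i hi)
    rw [hqq]
    exact homogeneousComponent_isHomogeneous n q
  · have hqq : q = 0 := by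
      nth_rewrite 1 [← sum_homogeneousComponent q]
      exact Finset.sum_eq_zero fun i hi => key i (by rintro rfl; exact hn hi)
    rw [hqq]
    exact isHomogeneous_zero _ _ _

lemma zero_mem_Pcone : (0 : MvP) ∈ Pcone :=
  ⟨isHomogeneous_zero _ _ _, fun a => by simp⟩

lemma Pcone_add {a b : MvP} (ha : a ∈ Pcone) (hb : b ∈ Pcone) : a + b ∈ Pcone :=
  ⟨ha.1.add hb.1, fun x => by rw [map_add]; exact add_nonneg (ha.2 x) (hb.2 x)⟩

lemma Pcone_smul {c : ℝ} (hc : 0 ≤ c) {a : MvP} (ha : a ∈ Pcone) : c • a ∈ Pcone :=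
  ⟨by rw [smul_eq_C_mul]; exact ha.1.C_mul c,
   fun x => by rw [smul_eval]; exact mul_nonneg hc (ha.2 x)⟩

lemma self_mem_Fface {f : MvP} (hf : f ∈ Pcone) : f ∈ Fface f :=
  ⟨hf, 1, one_pos, by rw [one_smul, sub_self]; exact zero_mem_Pcone⟩

lemma Fface_mono {f f' : MvP} (h : f ∈ Fface f') : Fface f ⊆ Fface f' := by
  rintro g ⟨hg, ε, hε, hfε⟩
  obtain ⟨hf, δ, hδ, hf'δ⟩ := h
  refine ⟨hg, δ * ε, mul_pos hδ hε, ?_⟩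
  have heq : f' - (δ * ε) • g = (f' - δ • f) + δ • (f - ε • g) := by
    rw [smul_sub, smul_smul]; abel
  rw [heq]
  exact Pcone_add hf'δ (Pcone_smul hδ.le hfε)

lemma partA {l : MvP} (hl : l.IsHomogeneous 1) (hl0 : l ≠ 0) {f g qf qg : MvP}
    (hf : f ∈ Pcone) (hg : g ∈ Pcone) (hfq : f = l ^ 2 * qf) (hgq : g = l ^ 2 * qg) :
    g ∈ Fface f ↔ ∀ a : V3, eval a qf = 0 → eval a qg = 0 := by
  have hl2 : (l ^ 2).IsHomogeneous 2 := by simpa using hl.pow 2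
  have hl20 : l ^ 2 ≠ 0 := pow_ne_zero 2 hl0
  have hqf2 : qf.IsHomogeneous 2 := by
    apply homog_quot hl2 hl20
    have h4 := hf.1
    rw [hfq] at h4
    exact h4
  have hqg2 : qg.IsHomogeneous 2 := by
    apply homog_quot hl2 hl20
    have h4 := hg.1
    rw [hgq] at h4
    exact h4
  have hqfpsd : ∀ a : V3, 0 ≤ eval a qf :=
    psd_of_sq_mul hl hl0 (fun x => by rw [← hfq]; exact hf.2 x)
  have hqgpsd : ∀ a : V3, 0 ≤ eval a qg :=
    psd_of_sq_mul hl hl0 (fun x => by rw [← hgq]; exact hg.2 x)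
  constructor
  · rintro ⟨-, ε, hε, hP⟩
    intro a ha
    have hfac : f - ε • g = l ^ 2 * (qf - ε • qg) := by
      rw [hfq, hgq, smul_eq_C_mul, smul_eq_C_mul]; ring
    have hpsd := psd_of_sq_mul hl hl0 (fun x => by rw [← hfac]; exact hP.2 x)
    have h1 := hpsd a
    rw [map_sub, smul_eval, ha] at h1
    have h2 := hqgpsd a
    nlinarith
  · intro hZ
    obtain ⟨Mf, hMf⟩ := quad_rep hqf2
    obtain ⟨Mg, hMg⟩ := quad_rep hqg2
    have hQf : ∀ x : V3, Qm Mf x = eval x qf := fun x => by unfold Qm; exact (hMf x).symm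
    have hQg : ∀ x : V3, Qm Mg x = eval x qg := fun x => by unfold Qm; exact (hMg x).symm
    obtain ⟨ε, hε, hineq⟩ := quad_ineq (M := Mf) (N := Mg)
      (fun x => by rw [hQf]; exact hqfpsd x)
      (fun x => by rw [hQg]; exact hqgpsd x)
      (fun x hx => by rw [hQg]; exact hZ x (by rw [← hQf]; exact hx))
    refine ⟨hg, ε, hε, ?_, ?_⟩
    · have h1 : ((ε : ℝ) • g).IsHomogeneous 4 := by
        rw [smul_eq_C_mul]; exact hg.1.C_mul ε
      exact hf.1.sub h1
    · intro x
      have hfac : f - ε • g = l ^ 2 * (qf - ε • qg) := by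
        rw [hfq, hgq, smul_eq_C_mul, smul_eq_C_mul]; ring
      rw [hfac, map_mul, map_pow, map_sub, smul_eval]
      apply mul_nonneg (sq_nonneg _)
      have := hineq x
      rw [hQf, hQg] at this
      linarith

lemma partB (l : MvP) (hl : l.IsHomogeneous 1) (U : Submodule ℝ V3) :
    ∃ f qf : MvP, f ∈ Pcone ∧ f = l ^ 2 * qf ∧
      {a : V3 | eval a qf = 0} = (U : Set V3) := by
  classical
  obtain ⟨W, hW⟩ := Submodule.exists_isCompl U
  set T : V3 →ₗ[ℝ] V3 := W.subtype.comp (W.projectionOnto U hW.symm) with hT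
  have hker : LinearMap.ker T = U := by
    rw [hT, LinearMap.ker_comp, Submodule.ker_subtype, Submodule.comap_bot,
      Submodule.linearProjOfIsCompl_ker]
  set c : Fin 3 → Fin 3 → ℝ := fun i j => T (fun k => if j = k then 1 else 0) i with hc
  have hTa : ∀ (a : V3) (i : Fin 3), T a i = ∑ j, c i j * a j := by
    intro a i
    rw [LinearMap.pi_apply_eq_sum_univ T a, Finset.sum_apply]
    exact Finset.sum_congr rfl fun j _ => by simp [hc, mul_comm]
  set linp : Fin 3 → MvP := fun i => ∑ j, MvPolynomial.C (c i j) * MvPolynomial.X j with hlinp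
  have hlinph : ∀ i, (linp i).IsHomogeneous 1 := fun i =>
    IsHomogeneous.sum _ _ _ (fun j _ => isHomogeneous_C_mul_X _ _)
  have hlinpe : ∀ (i : Fin 3) (a : V3), eval a (linp i) = T a i := by
    intro i a
    rw [hlinp]
    rw [map_sum, hTa a i]
    exact Finset.sum_congr rfl fun j _ => by simp
  set qf : MvP := ∑ i, (linp i) ^ 2 with hqf
  have hqfh : qf.IsHomogeneous 2 :=
    IsHomogeneous.sum _ _ _ (fun i _ => by simpa using (hlinph i).pow 2)
  have hqfe : ∀ a : V3, eval a qf = ∑ i, (T a i) ^ 2 := fun a => by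
    rw [hqf, map_sum]
    exact Finset.sum_congr rfl fun i _ => by rw [map_pow, hlinpe]
  refine ⟨l ^ 2 * qf, qf, ⟨?_, ?_⟩, rfl, ?_⟩
  · have h4 := (hl.pow 2).mul hqfh
    simpa using h4
  · intro a
    rw [map_mul, map_pow, hqfe]
    apply mul_nonneg (sq_nonneg _)
    exact Finset.sum_nonneg fun i _ => sq_nonneg _
  · ext a
    simp only [Set.mem_setOf_eq, SetLike.mem_coe, hqfe]
    rw [← hker, LinearMap.mem_ker]
    constructor
    · intro h
      funext i
      have hi := (Finset.sum_eq_zero_iff_of_nonneg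
        (fun i _ => sq_nonneg (T a i))).mp h i (Finset.mem_univ i)
      have := (pow_eq_zero_iff two_ne_zero).mp hi
      simpa using this
    · intro h
      simp [h]

lemma zset_submodule {l : MvP} (hl : l.IsHomogeneous 1) (hl0 : l ≠ 0) {f qf : MvP}
    (hf : f ∈ Pcone) (hfq : f = l ^ 2 * qf) :
    ∃ U : Submodule ℝ V3, (U : Set V3) = {a : V3 | eval a qf = 0} := by
  have hl2 : (l ^ 2).IsHomogeneous 2 := by simpa using hl.pow 2
  have hl20 : l ^ 2 ≠ 0 := pow_ne_zero 2 hl0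
  have hqf2 : qf.IsHomogeneous 2 := by
    apply homog_quot hl2 hl20
    have h4 := hf.1
    rw [hfq] at h4
    exact h4
  obtain ⟨M, hM⟩ := quad_rep hqf2
  have hQ : ∀ x : V3, Qm M x = eval x qf := fun x => by unfold Qm; exact (hM x).symm
  have hpsd : ∀ x : V3, 0 ≤ Qm M x := fun x => by
    rw [hQ]
    exact psd_of_sq_mul hl hl0 (fun y => by rw [← hfq]; exact hf.2 y) x
  refine ⟨Zmod M hpsd, ?_⟩
  ext a
  constructor
  · intro ha
    have : Qm M a = 0 := ha
    rw [hQ] at this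
    exact this
  · intro ha
    show Qm M a = 0
    rw [hQ]
    exact ha

end Stmt10Aux

theorem stmt_10 (l : MvP) (hl : l.IsHomogeneous 1) (hl0 : l ≠ 0) :
    (∀ f g qf qg : MvP, f ∈ Pcone → g ∈ Pcone → f = l ^ 2 * qf → g = l ^ 2 * qg →
      (g ∈ Fface f ↔ ∀ a : Fin 3 → ℝ, eval a qf = 0 → eval a qg = 0)) ∧
    (∀ U : Submodule ℝ (Fin 3 → ℝ), ∃ f qf : MvP, f ∈ Pcone ∧ f = l ^ 2 * qf ∧
      {a : Fin 3 → ℝ | eval a qf = 0} = (U : Set (Fin 3 → ℝ))) ∧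
    ∃ Φ : {F : Set MvP // ∃ f qf : MvP, f ∈ Pcone ∧ f = l ^ 2 * qf ∧ F = Fface f} ≃
        Submodule ℝ (Fin 3 → ℝ),
      ∀ (f qf : MvP), f ∈ Pcone → f = l ^ 2 * qf →
        ∀ h : ∃ f' qf' : MvP, f' ∈ Pcone ∧ f' = l ^ 2 * qf' ∧ Fface f = Fface f',
          (Φ ⟨Fface f, h⟩ : Set (Fin 3 → ℝ)) = {a : Fin 3 → ℝ | eval a qf = 0} := by
  classical
  refine ⟨fun f g qf qg hf hg hfq hgq => partA hl hl0 hf hg hfq hgq,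
    fun U => partB l hl U, ?_⟩
  choose fB qB hB1 hB2 hB3 using partB l hl
  set Ψ : Submodule ℝ (Fin 3 → ℝ) →
      {F : Set MvP // ∃ f qf : MvP, f ∈ Pcone ∧ f = l ^ 2 * qf ∧ F = Fface f} :=
    fun U => ⟨Fface (fB U), fB U, qB U, hB1 U, hB2 U, rfl⟩ with hΨ
  have hanti : ∀ f f' : MvP, f ∈ Fface f' → f' ∈ Fface f → Fface f = Fface f' :=
    fun f f' h1 h2 => Set.Subset.antisymm (Fface_mono h1) (Fface_mono h2)
  have hinj : Function.Injective Ψ := by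
    intro U U' hUU
    have hFF : Fface (fB U) = Fface (fB U') := congrArg Subtype.val hUU
    have m1 : fB U' ∈ Fface (fB U) := by rw [hFF]; exact self_mem_Fface (hB1 U')
    have m2 : fB U ∈ Fface (fB U') := by rw [← hFF]; exact self_mem_Fface (hB1 U)
    have i1 := (partA hl hl0 (hB1 U) (hB1 U') (hB2 U) (hB2 U')).mp m1
    have i2 := (partA hl hl0 (hB1 U') (hB1 U) (hB2 U') (hB2 U)).mp m2
    apply SetLike.ext'
    rw [← hB3 U, ← hB3 U']
    ext a
    exact ⟨fun h => i1 a h, fun h => i2 a h⟩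
  have hsurj : Function.Surjective Ψ := by
    rintro ⟨F, f, qf, hf, hfq, rfl⟩
    obtain ⟨U, hU⟩ := zset_submodule hl hl0 hf hfq
    refine ⟨U, Subtype.ext ?_⟩
    show Fface (fB U) = Fface f
    have hZZ : {a : V3 | eval a (qB U) = 0} = {a : V3 | eval a qf = 0} := by
      rw [hB3 U, hU]
    have hZZ' := Set.ext_iff.mp hZZ
    apply hanti
    · exact (partA hl hl0 hf (hB1 U) hfq (hB2 U)).mpr
        (fun a ha => (hZZ' a).mpr ha)
    · exact (partA hl hl0 (hB1 U) hf (hB2 U) hfq).mpr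
        (fun a ha => (hZZ' a).mp ha)
  set e := Equiv.ofBijective Ψ ⟨hinj, hsurj⟩ with he
  refine ⟨e.symm, ?_⟩
  intro f qf hf hfq h
  set x : {F : Set MvP // ∃ f qf : MvP, f ∈ Pcone ∧ f = l ^ 2 * qf ∧ F = Fface f} :=
    ⟨Fface f, h⟩ with hx
  set U₀ := e.symm x with hU₀
  have hΨx : Ψ U₀ = x := e.apply_symm_apply x
  have hFF : Fface (fB U₀) = Fface f := congrArg Subtype.val hΨx
  have m1 : f ∈ Fface (fB U₀) := by rw [hFF]; exact self_mem_Fface hf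
  have m2 : fB U₀ ∈ Fface f := by rw [← hFF]; exact self_mem_Fface (hB1 U₀)
  have i1 := (partA hl hl0 (hB1 U₀) hf (hB2 U₀) hfq).mp m1
  have i2 := (partA hl hl0 hf (hB1 U₀) hfq (hB2 U₀)).mp m2
  show (U₀ : Set (Fin 3 → ℝ)) = _
  rw [← hB3 U₀]
  ext a
  exact ⟨fun h' => i1 a h', fun h' => i2 a h'⟩
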